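/- Let Ω be a quasi-product with quasi-factors Λ and Γ. For composable paths p = p¹p² ∈ G(Λ)* and q = q¹q² ∈ G(Γ)*, the induced path actions satisfy p_▷(q¹q²) = (p_▷(q¹)) · ((q¹_◁(p))_▷(q²)) and q_◁(p¹p²) = ((p²_▷(q))_◁(p¹)) · (q_◁(p²)). -/

import Mathlib

/-- An edge-colored directed graph with `k` colors. -/
structure ColoredGraph (k : ℕ) where
  V : Type
  E : Type
  es : E → V
  er : E → V
  color : E → Fin k

namespace ColoredGraph

variable {k k₁ k₂ : ℕ}

/-- A (possibly empty) path in a colored graph: a base (source) vertex together with a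
composable list of edges, listed from the range end (head of the list is the last edge
traversed). -/
structure Pth (G : ColoredGraph k) where
  base : G.V
  edges : List G.E
  chain : edges.Chain' fun e f => G.es e = G.er f
  base_src : ∀ e ∈ edges.getLast?, G.es e = base

namespace Pth

variable {G : ColoredGraph k}

/-- The source of a path. -/
def s (p : G.Pth) : G.V := p.base

/-- The range of a path. -/
def r (p : G.Pth) : G.V := (p.edges.head?.map G.er).getD p.base

/-- The color order of a path. -/
def colors (p : G.Pth) : List (Fin k) := p.edges.map G.color

end Pth

/-- `G.IsComp p q pq` means that `pq` is the composite path "first `q`, then `p`"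
(written `pq = p q` in range-on-the-left notation). -/
def IsComp (G : ColoredGraph k) (p q pq : G.Pth) : Prop :=
  p.s = q.r ∧ pq.base = q.base ∧ pq.edges = p.edges ++ q.edges

/-- A factorization rule on the path category of a colored graph: a source-, range- and
color-order-compatible equivalence relation which respects composition (KG0) and such that
every equivalence class contains exactly one path of each permuted color order (KG4).
The quotient is then a `k`-graph. -/
structure FactRule (G : ColoredGraph k) where
  rel : G.Pth → G.Pth → Prop
  iseqv : Equivalence rel
  s_eq : ∀ p q, rel p q → p.s = q.s
  r_eq : ∀ p q, rel p q → p.r = q.r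
  kg0 : ∀ p p' q q' pq p'q', rel p p' → rel q q' →
    G.IsComp p q pq → G.IsComp p' q' p'q' → rel pq p'q'
  kg4 : ∀ (p : G.Pth) (l : List (Fin k)), l.Perm p.colors →
    ∃! q : G.Pth, rel p q ∧ q.colors = l

/-- The Cartesian (box) product of colored graphs. -/
def prodG (G₁ : ColoredGraph k₁) (G₂ : ColoredGraph k₂) : ColoredGraph (k₁ + k₂) where
  V := G₁.V × G₂.V
  E := G₁.E × G₂.V ⊕ G₁.V × G₂.E
  es e := match e with
    | .inl (e, w) => (G₁.es e, w)
    | .inr (v, f) => (v, G₂.es f)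
  er e := match e with
    | .inl (e, w) => (G₁.er e, w)
    | .inr (v, f) => (v, G₂.er f)
  color e := match e with
    | .inl (e, _) => Fin.castAdd k₂ (G₁.color e)
    | .inr (_, f) => Fin.natAdd k₁ (G₂.color f)

/-- The lift of a path of `G₁` to the slice `G₁ × {w}` of the product graph. -/
def lift₁ {G₁ : ColoredGraph k₁} {G₂ : ColoredGraph k₂} (w : G₂.V) (p : G₁.Pth) :
    (prodG G₁ G₂).Pth where
  base := (p.base, w)
  edges := p.edges.map fun e => Sum.inl (e, w)
  chain := by
    refine (List.isChain_map _).2 ?_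
    refine List.IsChain.imp ?_ p.chain
    intro a b h
    show ((G₁.es a, w) : G₁.V × G₂.V) = (G₁.er b, w)
    rw [h]
  base_src := by
    intro e he
    have h : Option.map (fun a => (Sum.inl (a, w) : (prodG G₁ G₂).E)) p.edges.getLast? = some e := by
      rw [← List.getLast?_map]; exact he
    obtain ⟨a, ha, rfl⟩ := Option.map_eq_some_iff.1 h
    show ((G₁.es a, w) : G₁.V × G₂.V) = (p.base, w)
    rw [p.base_src a ha]

/-- The lift of a path of `G₂` to the slice `{x} × G₂` of the product graph. -/
def lift₂ {G₁ : ColoredGraph k₁} {G₂ : ColoredGraph k₂} (x : G₁.V) (q : G₂.Pth) :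
    (prodG G₁ G₂).Pth where
  base := (x, q.base)
  edges := q.edges.map fun f => Sum.inr (x, f)
  chain := by
    refine (List.isChain_map _).2 ?_
    refine List.IsChain.imp ?_ q.chain
    intro a b h
    show ((x, G₂.es a) : G₁.V × G₂.V) = (x, G₂.er b)
    rw [h]
  base_src := by
    intro e he
    have h : Option.map (fun a => (Sum.inr (x, a) : (prodG G₁ G₂).E)) q.edges.getLast? = some e := by
      rw [← List.getLast?_map]; exact he
    obtain ⟨a, ha, rfl⟩ := Option.map_eq_some_iff.1 h
    show ((x, G₂.es a) : G₁.V × G₂.V) = (x, q.base)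
    rw [q.base_src a ha]

/-- The underlying undirected graph is connected. -/
def Connected (G : ColoredGraph k) : Prop :=
  ∀ a b : G.V,
    Relation.ReflTransGen
      (fun u v => ∃ e : G.E, (G.es e = u ∧ G.er e = v) ∨ (G.es e = v ∧ G.er e = u)) a b

/-- Row-finiteness at the level of the one-skeleton: for each vertex and color order there
are only finitely many paths into that vertex with that color order. -/
def RowFinite (G : ColoredGraph k) : Prop :=
  ∀ (v : G.V) (l : List (Fin k)), {p : G.Pth | p.r = v ∧ p.colors = l}.Finite

/-- A vertex-fixing automorphism of a colored graph. -/
def VertexFixingAut (G : ColoredGraph k) (F : G.E → G.E) : Prop :=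
  Function.Bijective F ∧
    ∀ e, G.es (F e) = G.es e ∧ G.er (F e) = G.er e ∧ G.color (F e) = G.color e

end ColoredGraph

open ColoredGraph

/-- A quasi-product `(k₁+k₂)`-graph: its one-skeleton is the product of the one-skeletons of
`Λ = (G₁, rLam)` and `Γ = (G₂, rGam)`, i.e. the quasi-product is given by a factorization
rule `rOmega` on the product graph; the quasi-factors embed as the slices at `base₂`
resp. `base₁` (the injective degree-compatible functors `ψ₁, ψ₂`). -/
structure QuasiProduct (k₁ k₂ : ℕ) where
  G₁ : ColoredGraph k₁
  G₂ : ColoredGraph k₂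
  rLam : G₁.FactRule
  rGam : G₂.FactRule
  rOmega : (prodG G₁ G₂).FactRule
  base₁ : G₁.V
  base₂ : G₂.V
  emb₁ : ∀ p q : G₁.Pth, rLam.rel p q ↔ rOmega.rel (lift₁ base₂ p) (lift₁ base₂ q)
  emb₂ : ∀ p q : G₂.Pth, rGam.rel p q ↔ rOmega.rel (lift₂ base₁ p) (lift₂ base₁ q)

variable {k₁ k₂ : ℕ}

/-- `ActsTo R p q q' p'` expresses, for a factorization rule `R` on the product graph, that
the Zappa–Szép actions of the associated matched pair satisfy `p ▷ q = q'` and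
`q ◁ p = p'`; that is, `([p], r q)(s p, [q]) = (r p, [q'])([p'], s q)`, with `q'` and `p'`
of the same color order as `q` and `p`. -/
def ActsTo {G₁ : ColoredGraph k₁} {G₂ : ColoredGraph k₂}
    (R : (prodG G₁ G₂).FactRule) (p : G₁.Pth) (q : G₂.Pth)
    (q' : G₂.Pth) (p' : G₁.Pth) : Prop :=
  ∃ lhs rhs : (prodG G₁ G₂).Pth,
    (prodG G₁ G₂).IsComp (lift₁ q.r p) (lift₂ p.s q) lhs ∧
    (prodG G₁ G₂).IsComp (lift₂ p.r q') (lift₁ q.s p') rhs ∧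
    R.rel lhs rhs ∧ q'.colors = q.colors ∧ p'.colors = p.colors

/-- The quasi-factor `Γ` of a quasi-product is *stable* if the left action is trivial:
`p ▷ q = q` for all paths. -/
def QuasiProduct.Stable (Q : QuasiProduct k₁ k₂) : Prop :=
  ∀ (p : Q.G₁.Pth) (q q' : Q.G₂.Pth) (p' : Q.G₁.Pth),
    ActsTo Q.rOmega p q q' p' → q' = q

/-- The factorization rule of the slice `Ω₁^w`, i.e. the rule induced on `G₁`-paths by the
slice `G₁ × {w}` of the quasi-product. -/
def QuasiProduct.relAt₁ (Q : QuasiProduct k₁ k₂) (w : Q.G₂.V) (p p' : Q.G₁.Pth) : Prop :=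
  Q.rOmega.rel (lift₁ w p) (lift₁ w p')

/-- The factorization rule of the slice `Ω₂^x`. -/
def QuasiProduct.relAt₂ (Q : QuasiProduct k₁ k₂) (x : Q.G₁.V) (q q' : Q.G₂.Pth) : Prop :=
  Q.rOmega.rel (lift₂ x q) (lift₂ x q')

/-- `F` implements a (vertex- and color-preserving) isomorphism from the quotient
`k`-graph `G*/R` to `G*/S`. -/
def RelIsoVia (G : ColoredGraph k) (R S : G.Pth → G.Pth → Prop) (F : G.Pth → G.Pth) :
    Prop :=
  (∀ p, (F p).s = p.s ∧ (F p).r = p.r ∧ (F p).colors = p.colors) ∧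
  (∀ p p', R p p' ↔ S (F p) (F p')) ∧
  (∀ p', ∃ p, S (F p) p') ∧
  (∀ p1 p2 p c, G.IsComp p1 p2 p → G.IsComp (F p1) (F p2) c → S (F p) c)

/-- An isomorphism of the `k`-graphs determined by two factorization rules on the same
colored graph, given by a vertex bijection `θV` and a map on paths `θP`. -/
def IsoOfRules {k : ℕ} (G : ColoredGraph k) (R S : G.FactRule)
    (θV : G.V → G.V) (θP : G.Pth → G.Pth) : Prop :=
  Function.Bijective θV ∧
  (∀ p, (θP p).s = θV p.s ∧ (θP p).r = θV p.r ∧ (θP p).colors = p.colors) ∧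
  (∀ p p', R.rel p p' ↔ S.rel (θP p) (θP p')) ∧
  (∀ q, ∃ p, S.rel (θP p) q) ∧
  (∀ p1 p2 p c, G.IsComp p1 p2 p → G.IsComp (θP p1) (θP p2) c → S.rel (θP p) c)

/-- `S` is the product factorization rule of `Λ = (G₁, rLam)` and `Γ = (G₂, rGam)`: its
slices are given by the factor rules and both Zappa–Szép actions are trivial. -/
def IsProductRule (G₁ : ColoredGraph k₁) (G₂ : ColoredGraph k₂)
    (rLam : G₁.FactRule) (rGam : G₂.FactRule) (S : (prodG G₁ G₂).FactRule) : Prop :=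
  (∀ (w : G₂.V) (p p' : G₁.Pth), rLam.rel p p' ↔ S.rel (lift₁ w p) (lift₁ w p')) ∧
  (∀ (x : G₁.V) (q q' : G₂.Pth), rGam.rel q q' ↔ S.rel (lift₂ x q) (lift₂ x q')) ∧
  (∀ (p : G₁.Pth) (q q' : G₂.Pth) (p' : G₁.Pth),
    ActsTo S p q q' p' → q' = q ∧ p' = p)

namespace ColoredGraph

section Helpers

variable {k k₁ k₂ : ℕ} {G : ColoredGraph k}

theorem Pth.ext' {p q : G.Pth} (hb : p.base = q.base) (he : p.edges = q.edges) : p = q := by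
  cases p; cases q; simp_all

theorem Pth.r_of_nil {p : G.Pth} (h : p.edges = []) : p.r = p.base := by
  simp [Pth.r, h]

theorem Pth.r_of_cons {p : G.Pth} {e : G.E} {t : List G.E} (h : p.edges = e :: t) :
    p.r = G.er e := by
  simp [Pth.r, h]

theorem IsComp.src {p q pq : G.Pth} (h : G.IsComp p q pq) : pq.s = q.s := h.2.1

theorem IsComp.rng {p q pq : G.Pth} (h : G.IsComp p q pq) : pq.r = p.r := by
  obtain ⟨h1, h2, h3⟩ := h
  cases hp : p.edges with
  | nil =>
      have hq : pq.edges = q.edges := by rw [h3, hp, List.nil_append]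
      have h4 : pq.r = q.r := by unfold Pth.r; rw [hq, h2]
      rw [h4, ← h1, Pth.s, Pth.r_of_nil hp]
  | cons e t =>
      have hq : pq.edges = e :: (t ++ q.edges) := by rw [h3, hp, List.cons_append]
      rw [Pth.r_of_cons hq, Pth.r_of_cons hp]

theorem IsComp.cls {p q pq : G.Pth} (h : G.IsComp p q pq) :
    pq.colors = p.colors ++ q.colors := by
  simp [Pth.colors, h.2.2]

/-- Explicit composite of two composable paths. -/
def Pth.comp (p q : G.Pth) (h : p.s = q.r) : G.Pth where
  base := q.base
  edges := p.edges ++ q.edges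
  chain := by
    refine p.chain.append q.chain ?_
    intro e he f hf
    rw [p.base_src e he]
    have : q.r = G.er f := Pth.r_of_cons (List.head?_eq_some_iff.mp hf).choose_spec
    rw [← this, ← h, Pth.s]
  base_src := by
    intro e he
    cases hq : q.edges with
    | nil =>
        rw [hq, List.append_nil] at he
        rw [p.base_src e he, ← Pth.s, h, Pth.r_of_nil hq]
    | cons f t =>
        rw [hq, List.getLast?_append_cons] at he
        exact q.base_src e (by rw [hq]; exact he)
    
theorem isComp_comp (p q : G.Pth) (h : p.s = q.r) : G.IsComp p q (p.comp q h) :=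
  ⟨h, rfl, rfl⟩

theorem IsComp.unique {p q c c' : G.Pth} (h : G.IsComp p q c) (h' : G.IsComp p q c') :
    c = c' :=
  Pth.ext' (h.2.1.trans h'.2.1.symm) (h.2.2.trans h'.2.2.symm)

theorem IsComp.assoc₁ {a b c ab bc abc : G.Pth} (hab : G.IsComp a b ab)
    (hbc : G.IsComp b c bc) (h : G.IsComp a bc abc) : G.IsComp ab c abc := by
  refine ⟨?_, ?_, ?_⟩
  · rw [hab.src, hbc.1]
  · rw [h.2.1, hbc.2.1]
  · rw [h.2.2, hbc.2.2, hab.2.2, List.append_assoc]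

theorem IsComp.assoc₂ {a b c ab bc abc : G.Pth} (hab : G.IsComp a b ab)
    (hbc : G.IsComp b c bc) (h : G.IsComp ab c abc) : G.IsComp a bc abc := by
  refine ⟨?_, ?_, ?_⟩
  · rw [hbc.rng, hab.1]
  · rw [h.2.1, hbc.2.1]
  · rw [h.2.2, hab.2.2, hbc.2.2, List.append_assoc]

variable {G₁ : ColoredGraph k₁} {G₂ : ColoredGraph k₂}

theorem prodG_mk_eq {a c : G₁.V} {b d : G₂.V} :
    (@Eq (prodG G₁ G₂).V (a, b) (c, d)) = (a = c ∧ b = d) := Prod.mk.injEq ..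

theorem lift₁_s (w : G₂.V) (p : G₁.Pth) : (lift₁ (G₂ := G₂) w p).s = (p.s, w) := rfl

theorem lift₂_s (x : G₁.V) (q : G₂.Pth) : (lift₂ (G₁ := G₁) x q).s = (x, q.s) := rfl

theorem lift₁_r (w : G₂.V) (p : G₁.Pth) : (lift₁ (G₂ := G₂) w p).r = (p.r, w) := by
  cases h : p.edges with
  | nil => simp [lift₁, Pth.r, h]; rfl
  | cons e t => simp [lift₁, Pth.r, h, prodG]

theorem lift₂_r (x : G₁.V) (q : G₂.Pth) : (lift₂ (G₁ := G₁) x q).r = (x, q.r) := by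
  cases h : q.edges with
  | nil => simp [lift₂, Pth.r, h]; rfl
  | cons e t => simp [lift₂, Pth.r, h, prodG]

theorem isComp_lift₁ {p1 p2 p : G₁.Pth} (w : G₂.V) (h : G₁.IsComp p1 p2 p) :
    (prodG G₁ G₂).IsComp (lift₁ w p1) (lift₁ w p2) (lift₁ w p) := by
  refine ⟨?_, ?_, ?_⟩
  · rw [lift₁_s, lift₁_r, h.1]
  · show (p.base, w) = (p2.base, w)
    rw [h.2.1]
  · simp [lift₁, h.2.2]; exact List.map_append

theorem isComp_lift₂ {q1 q2 q : G₂.Pth} (x : G₁.V) (h : G₂.IsComp q1 q2 q) :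
    (prodG G₁ G₂).IsComp (lift₂ x q1) (lift₂ x q2) (lift₂ x q) := by
  refine ⟨?_, ?_, ?_⟩
  · rw [lift₂_s, lift₂_r, h.1]
  · show (x, q.base) = (x, q2.base)
    rw [h.2.1]
  · simp [lift₂, h.2.2]; exact List.map_append

end Helpers

end ColoredGraph
open ColoredGraph in
/-- In a quasi-product, the induced path actions satisfy, for
`q = q¹q²` and `p = p¹p²`:
`p ▷ (q¹q²) = (p ▷ q¹)((q¹ ◁ p) ▷ q²)` with `(q¹q²) ◁ p = q² ◁ (q¹ ◁ p)`, and
`(p¹p²) ▷ q = p¹ ▷ (p² ▷ q)` with `q ◁ (p¹p²) = ((p² ▷ q) ◁ p¹)(q ◁ p²)`. -/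
theorem stmt7 {k₁ k₂ : ℕ} (Q : QuasiProduct k₁ k₂) :
    (∀ (p : Q.G₁.Pth) (q1 q2 q : Q.G₂.Pth) (q1' : Q.G₂.Pth) (p1' : Q.G₁.Pth)
        (q2' : Q.G₂.Pth) (p2' : Q.G₁.Pth) (q' : Q.G₂.Pth),
      Q.G₂.IsComp q1 q2 q →
      ActsTo Q.rOmega p q1 q1' p1' →
      ActsTo Q.rOmega p1' q2 q2' p2' →
      Q.G₂.IsComp q1' q2' q' →
      ActsTo Q.rOmega p q q' p2') ∧
    (∀ (p1 p2 p : Q.G₁.Pth) (q : Q.G₂.Pth) (qa : Q.G₂.Pth) (pa : Q.G₁.Pth)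
        (qb : Q.G₂.Pth) (pb : Q.G₁.Pth) (p' : Q.G₁.Pth),
      Q.G₁.IsComp p1 p2 p →
      ActsTo Q.rOmega p2 q qa pa →
      ActsTo Q.rOmega p1 qa qb pb →
      Q.G₁.IsComp pb pa p' →
      ActsTo Q.rOmega p q qb p') := by
  constructor
  · intro p q1 q2 q q1' p1' q2' p2' q' hq h1 h2 hq'
    obtain ⟨L1, R1, hL1, hR1, hrel1, hc1q, hc1p⟩ := h1
    obtain ⟨L2, R2, hL2, hR2, hrel2, hc2q, hc2p⟩ := h2
    have hqr : q.r = q1.r := hq.rng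
    have hqs : q.s = q2.s := hq.src
    have hR1c := hR1.1
    rw [lift₂_s, lift₁_r, prodG_mk_eq] at hR1c
    obtain ⟨hp1'r, hq1's⟩ := hR1c
    have hs1 := Q.rOmega.s_eq _ _ hrel1
    rw [hL1.src, hR1.src, lift₂_s, lift₁_s, prodG_mk_eq] at hs1
    have hp1's : p.s = p1'.s := hs1.1
    have hABc : (lift₁ q.r p).s = (lift₂ p.s q).r := by rw [lift₁_s, lift₂_r]
    set LHS := (lift₁ q.r p).comp (lift₂ p.s q) hABc with hLHSdef
    have hLHS := isComp_comp (lift₁ q.r p) (lift₂ p.s q) hABc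
    have hBB := isComp_lift₂ (G₁ := Q.G₁) p.s hq
    have hAB1 : (prodG Q.G₁ Q.G₂).IsComp (lift₁ q.r p) (lift₂ p.s q1) L1 := by
      rw [hqr]; exact hL1
    have hL1B2 : (prodG Q.G₁ Q.G₂).IsComp L1 (lift₂ p.s q2) LHS := hAB1.assoc₁ hBB hLHS
    have hMc : R1.s = (lift₂ p.s q2).r := by
      rw [hR1.src, lift₁_s, lift₂_r, prodG_mk_eq]
      exact ⟨hp1's.symm, hq.1⟩
    set M := R1.comp (lift₂ p.s q2) hMc with hMdef
    have hM := isComp_comp R1 _ hMc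
    have hrelLM : Q.rOmega.rel LHS M :=
      Q.rOmega.kg0 L1 R1 _ _ LHS M hrel1 (Q.rOmega.iseqv.refl _) hL1B2 hM
    have hNc : (lift₁ q1.s p1').s = (lift₂ p.s q2).r := by
      rw [lift₁_s, lift₂_r, prodG_mk_eq]
      exact ⟨hp1's.symm, hq.1⟩
    set N := (lift₁ q1.s p1').comp (lift₂ p.s q2) hNc with hNdef
    have hN := isComp_comp _ _ hNc
    have hCNM : (prodG Q.G₁ Q.G₂).IsComp (lift₂ p.r q1') N M := hR1.assoc₂ hN hM
    have hNL2 : N = L2 := by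
      rw [← hq.1, ← hp1's] at hL2
      exact hN.unique hL2
    have hrelNR2 : Q.rOmega.rel N R2 := hNL2 ▸ hrel2
    have hM2c : (lift₂ p.r q1').s = R2.r := by
      rw [hR2.rng, lift₂_s, lift₂_r, prodG_mk_eq]
      exact ⟨hp1'r, hq'.1⟩
    set M2 := (lift₂ p.r q1').comp R2 hM2c with hM2def
    have hM2 := isComp_comp _ _ hM2c
    have hrelMM2 : Q.rOmega.rel M M2 :=
      Q.rOmega.kg0 _ _ N R2 M M2 (Q.rOmega.iseqv.refl _) hrelNR2 hCNM hM2
    rw [← hp1'r, ← hqs] at hR2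
    have hCC := isComp_lift₂ (G₁ := Q.G₁) p.r hq'
    have hfinal : (prodG Q.G₁ Q.G₂).IsComp (lift₂ p.r q') (lift₁ q.s p2') M2 :=
      hCC.assoc₁ hR2 hM2
    exact ⟨LHS, M2, hLHS, hfinal, Q.rOmega.iseqv.trans hrelLM hrelMM2,
      by rw [hq'.cls, hq.cls, hc1q, hc2q], hc2p.trans hc1p⟩
  · intro p1 p2 p q qa pa qb pb p' hp h1 h2 hp'
    obtain ⟨L1, R1, hL1, hR1, hrel1, hc1q, hc1p⟩ := h1
    obtain ⟨L2, R2, hL2, hR2, hrel2, hc2q, hc2p⟩ := h2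
    have hpr : p.r = p1.r := hp.rng
    have hps : p.s = p2.s := hp.src
    have hR1c := hR1.1
    rw [lift₂_s, lift₁_r, prodG_mk_eq] at hR1c
    obtain ⟨hpar, hqas⟩ := hR1c
    have hs1 := Q.rOmega.s_eq _ _ hrel1
    rw [hL1.src, hR1.src, lift₂_s, lift₁_s, prodG_mk_eq] at hs1
    have hpas : p2.s = pa.s := hs1.1
    have hr1 := Q.rOmega.r_eq _ _ hrel1
    rw [hL1.rng, hR1.rng, lift₁_r, lift₂_r, prodG_mk_eq] at hr1
    have hqar : q.r = qa.r := hr1.2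
    have hs2 := Q.rOmega.s_eq _ _ hrel2
    rw [hL2.src, hR2.src, lift₂_s, lift₁_s, prodG_mk_eq] at hs2
    have hpbs : p1.s = pb.s := hs2.1
    have hABc : (lift₁ q.r p).s = (lift₂ p.s q).r := by rw [lift₁_s, lift₂_r]
    set LHS := (lift₁ q.r p).comp (lift₂ p.s q) hABc with hLHSdef
    have hLHS := isComp_comp (lift₁ q.r p) (lift₂ p.s q) hABc
    have hAA := isComp_lift₁ (G₂ := Q.G₂) q.r hp
    have hL1' : (prodG Q.G₁ Q.G₂).IsComp (lift₁ q.r p2) (lift₂ p.s q) L1 := by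
      rw [hps]; exact hL1
    have hA1L1 : (prodG Q.G₁ Q.G₂).IsComp (lift₁ q.r p1) L1 LHS := hAA.assoc₂ hL1' hLHS
    have hMc : (lift₁ q.r p1).s = R1.r := by
      rw [hR1.rng, lift₁_s, lift₂_r, prodG_mk_eq]
      exact ⟨hp.1, hqar⟩
    set M := (lift₁ q.r p1).comp R1 hMc with hMdef
    have hM := isComp_comp _ _ hMc
    have hrelLM : Q.rOmega.rel LHS M :=
      Q.rOmega.kg0 _ _ L1 R1 LHS M (Q.rOmega.iseqv.refl _) hrel1 hA1L1 hM
    have hNc : (lift₁ q.r p1).s = (lift₂ p2.r qa).r := by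
      rw [lift₁_s, lift₂_r, prodG_mk_eq]
      exact ⟨hp.1, hqar⟩
    set N := (lift₁ q.r p1).comp (lift₂ p2.r qa) hNc with hNdef
    have hN := isComp_comp _ _ hNc
    have hNDM : (prodG Q.G₁ Q.G₂).IsComp N (lift₁ q.s pa) M := hN.assoc₁ hR1 hM
    have hNL2 : N = L2 := by
      rw [← hqar, hp.1] at hL2
      exact hN.unique hL2
    have hrelNR2 : Q.rOmega.rel N R2 := hNL2 ▸ hrel2
    have hM2c : R2.s = (lift₁ q.s pa).r := by
      rw [hR2.src, lift₁_s, lift₁_r, prodG_mk_eq]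
      exact ⟨(hpbs.symm.trans hp.1).trans hpar, hqas⟩
    set M2 := R2.comp (lift₁ q.s pa) hM2c with hM2def
    have hM2 := isComp_comp _ _ hM2c
    have hrelMM2 : Q.rOmega.rel M M2 :=
      Q.rOmega.kg0 N R2 _ _ M M2 hrelNR2 (Q.rOmega.iseqv.refl _) hNDM hM2
    rw [← hpr, hqas] at hR2
    have hDD := isComp_lift₁ (G₂ := Q.G₂) q.s hp'
    have hfinal : (prodG Q.G₁ Q.G₂).IsComp (lift₂ p.r qb) (lift₁ q.s p') M2 :=
      hR2.assoc₂ hDD hM2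
    exact ⟨LHS, M2, hLHS, hfinal, Q.rOmega.iseqv.trans hrelLM hrelMM2,
      hc2q.trans hc1q, by rw [hp'.cls, hp.cls, hc2p, hc1p]⟩
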